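/- Let v_0, ..., v_k be points in ℝ^n and let w be a point in the interior of the convex hull of {v_0, ..., v_k}. Then the integral ∫_{ℝ^n} e^{⟨w, y⟩}/(∑_{i=0}^k e^{⟨v_i, y⟩}) dy is finite. -/

import Mathlib

open MeasureTheory

private lemma exp_neg_mul_norm_integrable {n : ℕ} {c : ℝ} (hc : 0 < c) :
    Integrable (fun y : EuclideanSpace ℝ (Fin n) => Real.exp (-(c * ‖y‖))) := by
  have hnr : ((Module.finrank ℝ (EuclideanSpace ℝ (Fin n)) : ℝ)) < ((n + 1 : ℕ) : ℝ) := by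
    simp [finrank_euclideanSpace]
  set m : ℕ := n + 1 with hm
  set K : ℝ := Real.exp c * (m.factorial) / c ^ m with hK
  refine ((integrable_one_add_norm (E := EuclideanSpace ℝ (Fin n)) (r := (m : ℝ))
    hnr).const_mul K).mono' ?_ (Filter.Eventually.of_forall fun y => ?_)
  · exact (Real.continuous_exp.comp (continuous_const.mul continuous_norm).neg).aestronglyMeasurable
  · have hy : (0 : ℝ) ≤ ‖y‖ := norm_nonneg y
    have h1 : (0 : ℝ) < 1 + ‖y‖ := by linarith
    rw [Real.norm_eq_abs, abs_of_pos (Real.exp_pos _)]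
    have hpow : (c * (1 + ‖y‖)) ^ m / (m.factorial : ℝ) ≤ Real.exp (c * (1 + ‖y‖)) :=
      Real.pow_div_factorial_le_exp _ (by positivity) m
    have hfac : (0 : ℝ) < (m.factorial : ℝ) := by positivity
    have hexp : Real.exp (c * (1 + ‖y‖)) = Real.exp c * Real.exp (c * ‖y‖) := by
      rw [← Real.exp_add]; ring_nf
    have h2 : c ^ m * (1 + ‖y‖) ^ m ≤ (m.factorial : ℝ) * (Real.exp c * Real.exp (c * ‖y‖)) := by
      rw [← hexp, ← mul_pow]
      calc (c * (1 + ‖y‖)) ^ m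
          = (c * (1 + ‖y‖)) ^ m / (m.factorial : ℝ) * (m.factorial : ℝ) := by field_simp
        _ ≤ Real.exp (c * (1 + ‖y‖)) * (m.factorial : ℝ) :=
            mul_le_mul_of_nonneg_right hpow hfac.le
        _ = (m.factorial : ℝ) * Real.exp (c * (1 + ‖y‖)) := by ring
    have h3 : (1 + ‖y‖) ^ m ≤ K * Real.exp (c * ‖y‖) := by
      rw [hK, div_mul_eq_mul_div, le_div_iff₀ (pow_pos hc m)]
      nlinarith [h2]
    have hrpow : (1 + ‖y‖) ^ (-(m : ℝ)) = ((1 + ‖y‖) ^ m)⁻¹ := by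
      rw [Real.rpow_neg h1.le, Real.rpow_natCast]
    rw [hrpow, Real.exp_neg, inv_eq_one_div, inv_eq_one_div, mul_one_div,
      div_le_div_iff₀ (Real.exp_pos _) (by positivity), one_mul]
    exact h3
set_option maxHeartbeats 1000000 in
theorem stmt_1 {n k : ℕ} (v : Fin (k + 1) → EuclideanSpace ℝ (Fin n))
    (w : EuclideanSpace ℝ (Fin n))
    (hw : w ∈ interior (convexHull ℝ (Set.range v))) :
    Integrable (fun y : EuclideanSpace ℝ (Fin n) =>
      Real.exp (inner ℝ w y : ℝ) / ∑ i, Real.exp (inner ℝ (v i) y : ℝ)) := by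
  obtain ⟨ε, hε, hball⟩ := Metric.isOpen_iff.mp isOpen_interior w hw
  set c : ℝ := ε / 2 with hcdef
  have hc : 0 < c := half_pos hε
  have hSpos : ∀ y : EuclideanSpace ℝ (Fin n),
      (0 : ℝ) < ∑ i, Real.exp (inner ℝ (v i) y : ℝ) := fun y =>
    Finset.sum_pos (fun i _ => Real.exp_pos _) Finset.univ_nonempty
  -- key lower bound on the denominator
  have key : ∀ y : EuclideanSpace ℝ (Fin n),
      Real.exp ((inner ℝ w y : ℝ) + c * ‖y‖) ≤ ∑ i, Real.exp (inner ℝ (v i) y : ℝ) := by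
    intro y
    rcases eq_or_ne y 0 with rfl | hy
    · have h1 : ∀ u : EuclideanSpace ℝ (Fin n),
          (inner ℝ u (0 : EuclideanSpace ℝ (Fin n)) : ℝ) = 0 := fun u => inner_zero_right u
      rw [norm_zero, mul_zero, add_zero, h1]
      rw [Real.exp_zero]
      have : ∑ i : Fin (k + 1),
          Real.exp (inner ℝ (v i) (0 : EuclideanSpace ℝ (Fin n)) : ℝ) = (k + 1 : ℝ) := by
        simp [h1]
      rw [this]
      have : (0:ℝ) ≤ (k : ℝ) := Nat.cast_nonneg k
      linarith
    · have hny : (0 : ℝ) < ‖y‖ := norm_pos_iff.mpr hy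
      set p : EuclideanSpace ℝ (Fin n) := w + (c / ‖y‖) • y with hp
      have hpmem : p ∈ convexHull ℝ (Set.range v) := by
        apply interior_subset
        apply hball
        rw [Metric.mem_ball, dist_eq_norm]
        have : p - w = (c / ‖y‖) • y := by rw [hp]; abel
        rw [this, norm_smul, Real.norm_eq_abs, abs_of_pos (by positivity),
          div_mul_cancel₀ _ hny.ne']
        rw [hcdef]; linarith
      have hip : (inner ℝ p y : ℝ) = (inner ℝ w y : ℝ) + c * ‖y‖ := by
        rw [hp, inner_add_left, real_inner_smul_left, real_inner_self_eq_norm_sq]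
        field_simp
      obtain ⟨ι, hι, t, z, ht0, ht1, hz, hzp⟩ := mem_convexHull_iff_exists_fintype.mp hpmem
      have hipz : (inner ℝ p y : ℝ) = ∑ i, t i * (inner ℝ (z i) y : ℝ) := by
        rw [← hzp, sum_inner]
        exact Finset.sum_congr rfl fun i _ => real_inner_smul_left _ _ _
      have jensen : Real.exp (inner ℝ p y : ℝ) ≤ ∑ i, t i * Real.exp (inner ℝ (z i) y : ℝ) := by
        rw [hipz]
        have := convexOn_exp.map_sum_le (t := (Finset.univ : Finset ι))
          (w := t) (p := fun i => (inner ℝ (z i) y : ℝ))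
          (fun i _ => ht0 i) ht1 (fun i _ => Set.mem_univ _)
        simpa [smul_eq_mul] using this
      have hterm : ∀ i : ι, Real.exp (inner ℝ (z i) y : ℝ)
          ≤ ∑ j, Real.exp (inner ℝ (v j) y : ℝ) := by
        intro i
        obtain ⟨j, hj⟩ := hz i
        calc Real.exp (inner ℝ (z i) y : ℝ) = Real.exp (inner ℝ (v j) y : ℝ) := by rw [hj]
          _ ≤ ∑ j, Real.exp (inner ℝ (v j) y : ℝ) :=
            Finset.single_le_sum (f := fun j => Real.exp (inner ℝ (v j) y : ℝ))
              (fun j _ => (Real.exp_pos _).le) (Finset.mem_univ j)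
      calc Real.exp ((inner ℝ w y : ℝ) + c * ‖y‖) = Real.exp (inner ℝ p y : ℝ) := by rw [hip]
        _ ≤ ∑ i, t i * Real.exp (inner ℝ (z i) y : ℝ) := jensen
        _ ≤ ∑ i, t i * ∑ j, Real.exp (inner ℝ (v j) y : ℝ) :=
            Finset.sum_le_sum fun i _ => mul_le_mul_of_nonneg_left (hterm i) (ht0 i)
        _ = ∑ j, Real.exp (inner ℝ (v j) y : ℝ) := by
            rw [← Finset.sum_mul, ht1, one_mul]
  -- continuity / measurability
  have hinner : ∀ u : EuclideanSpace ℝ (Fin n),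
      Continuous (fun y : EuclideanSpace ℝ (Fin n) => (inner ℝ u y : ℝ)) := fun u =>
    Continuous.inner continuous_const continuous_id
  have hcont : Continuous (fun y : EuclideanSpace ℝ (Fin n) =>
      Real.exp (inner ℝ w y : ℝ) / ∑ i, Real.exp (inner ℝ (v i) y : ℝ)) := by
    apply Continuous.div
    · exact Real.continuous_exp.comp (hinner w)
    · exact continuous_finset_sum _ fun i _ => Real.continuous_exp.comp (hinner (v i))
    · exact fun y => (hSpos y).ne'
  refine (exp_neg_mul_norm_integrable (n := n) hc).mono' hcont.aestronglyMeasurable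
    (Filter.Eventually.of_forall fun y => ?_)
  have hS := hSpos y
  rw [Real.norm_eq_abs, abs_of_nonneg (by positivity)]
  calc Real.exp (inner ℝ w y : ℝ) / ∑ i, Real.exp (inner ℝ (v i) y : ℝ)
      ≤ Real.exp (inner ℝ w y : ℝ) / Real.exp ((inner ℝ w y : ℝ) + c * ‖y‖) :=
        div_le_div_of_nonneg_left (Real.exp_pos _).le (Real.exp_pos _) (key y)
    _ = Real.exp (-(c * ‖y‖)) := by
        rw [← Real.exp_sub]; ring_nf
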